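/- For fixed probability densities f, g, the functional D ↦ ∬ [log D(X) + log(1−D(Y))] f(X) g(Y) dX dY over measurable functions D with values in (0,1) is maximized pointwise by D*(x) = f(x)/(f(x)+g(x)). -/

import Mathlib

open MeasureTheory

/-- The GAN objective `∬ [log D(X) + log(1−D(Y))] f(X) g(Y) dX dY` is maximized
pointwise (in the integrand `x ↦ f x log D x + g x log(1−D x)`) by the
discriminator `D*(x) = f(x)/(f(x)+g(x))`. -/
theorem optimal_discriminator_pointwise {d : ℕ}
    (f g D : (Fin d → ℝ) → ℝ)
    (hf0 : ∀ x, 0 ≤ f x) (hg0 : ∀ x, 0 ≤ g x)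
    (hfg : ∀ x, 0 < f x + g x)
    (hDmeas : Measurable D)
    (hD : ∀ x, D x ∈ Set.Ioo (0 : ℝ) 1) :
    ∀ x, f x * Real.log (D x) + g x * Real.log (1 - D x) ≤
      f x * Real.log (f x / (f x + g x)) + g x * Real.log (g x / (f x + g x)) := by
  intro x
  obtain ⟨ht0, ht1⟩ := hD x
  set a := f x with ha'
  set b := g x with hb'
  set t := D x with ht'
  have hab := hfg x
  have ha := hf0 x
  have hb := hg0 x
  have h1t : (0:ℝ) < 1 - t := by linarith
  rcases eq_or_lt_of_le ha with ha0 | ha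
  · -- a = 0
    have ha0' : a = 0 := ha0.symm
    rw [ha0']
    have hbpos : 0 < b := by linarith
    have : b / (0 + b) = 1 := by rw [zero_add]; exact div_self (ne_of_gt hbpos)
    rw [this]
    simp only [zero_mul, zero_add, Real.log_one, mul_zero]
    exact mul_nonpos_of_nonneg_of_nonpos hb (Real.log_nonpos (le_of_lt h1t) (by linarith))
  rcases eq_or_lt_of_le hb with hb0 | hb
  · -- b = 0
    have hb0' : b = 0 := hb0.symm
    rw [hb0']
    have : a / (a + 0) = 1 := by rw [add_zero]; exact div_self (ne_of_gt ha)
    rw [this]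
    simp only [zero_mul, add_zero, Real.log_one, mul_zero]
    exact mul_nonpos_of_nonneg_of_nonpos (le_of_lt ha) (Real.log_nonpos (le_of_lt ht0) (le_of_lt ht1))
  · -- a > 0, b > 0
    have hs : 0 < a + b := hab
    have h1 : Real.log (t / (a / (a + b))) ≤ t / (a / (a + b)) - 1 :=
      Real.log_le_sub_one_of_pos (by positivity)
    have h2 : Real.log ((1 - t) / (b / (a + b))) ≤ (1 - t) / (b / (a + b)) - 1 :=
      Real.log_le_sub_one_of_pos (by positivity)
    rw [Real.log_div (ne_of_gt ht0) (by positivity)] at h1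
    rw [Real.log_div (ne_of_gt h1t) (by positivity)] at h2
    have e1 : t / (a / (a + b)) = t * (a + b) / a := by field_simp
    have e2 : (1 - t) / (b / (a + b)) = (1 - t) * (a + b) / b := by field_simp
    rw [e1] at h1
    rw [e2] at h2
    have h1' : a * (Real.log t - Real.log (a / (a + b))) ≤ t * (a + b) - a := by
      have := mul_le_mul_of_nonneg_left h1 (le_of_lt ha)
      calc a * (Real.log t - Real.log (a / (a + b))) ≤ a * (t * (a + b) / a - 1) := this
        _ = t * (a + b) - a := by have hane : a ≠ 0 := ne_of_gt ha; field_simp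
    have h2' : b * (Real.log (1 - t) - Real.log (b / (a + b))) ≤ (1 - t) * (a + b) - b := by
      have := mul_le_mul_of_nonneg_left h2 (le_of_lt hb)
      calc b * (Real.log (1 - t) - Real.log (b / (a + b))) ≤ b * ((1 - t) * (a + b) / b - 1) := this
        _ = (1 - t) * (a + b) - b := by have hbne : b ≠ 0 := ne_of_gt hb; field_simp
    nlinarith [h1', h2']
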